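/- For n ≥ 3 and no n-th root of unity ω^k (1 ≤ k ≤ n-1) satisfies 1 - Pₙ₊₁ - Pₙ ω^k = 0; equivalently, (1 - Pₙ₊₁)/Pₙ is not an n-th root of unity distinct from 1. -/

import Mathlib

def pell : ℕ → ℚ
  | 0 => 0
  | 1 => 1
  | n + 2 => 2 * pell (n + 1) + pell n

def pellLucas : ℕ → ℚ
  | 0 => 2
  | 1 => 2
  | n + 2 => 2 * pellLucas (n + 1) + pellLucas n

/-- Circulant matrix `circ (c₁, …, cₙ)` with `(i,j)` entry `c ((j - i mod n) + 1)`. -/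
def circMat (n : ℕ) (c : ℕ → ℚ) : Matrix (Fin n) (Fin n) ℚ :=
  fun i j => c ((j - i : Fin n).val + 1)

lemma pell_nonneg : ∀ n, 0 ≤ pell n := by
  intro n
  induction n using Nat.twoStepInduction with
  | zero => norm_num [pell]
  | one => norm_num [pell]
  | more n ih1 ih2 => rw [pell]; linarith

lemma pell_ge_one : ∀ n, 1 ≤ pell (n + 1) := by
  intro n
  induction n using Nat.twoStepInduction with
  | zero => norm_num [pell]
  | one => norm_num [pell]
  | more n ih1 ih2 => rw [pell]; have := pell_nonneg (n+1); linarith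

theorem pell_no_root_of_unity (n : ℕ) (hn : 3 ≤ n) (k : ℕ) (hk1 : 1 ≤ k) (hk2 : k ≤ n - 1)
    (ω : ℂ) (hω : ω = Complex.exp (2 * Real.pi * Complex.I / n)) :
    1 - (pell (n + 1) : ℂ) - (pell n : ℂ) * ω ^ k ≠ 0 := by
  intro h
  have hωabs : ‖ω‖ = 1 := by
    rw [hω]
    rw [Complex.norm_exp]
    have : (2 * ↑Real.pi * Complex.I / ↑n).re = 0 := by
      have hn0 : (n:ℝ) ≠ 0 := by positivity
      simp [Complex.div_re, Complex.normSq]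
    rw [this, Real.exp_zero]
  have heq : (pell n : ℂ) * ω ^ k = 1 - (pell (n + 1) : ℂ) := by
    linear_combination -h
  have habs := congrArg norm heq
  rw [norm_mul, norm_pow, hωabs, one_pow, mul_one] at habs
  have h1 : ‖(pell n : ℂ)‖ = (pell n : ℝ) := by
    rw [← Complex.ofReal_ratCast, Complex.norm_real, Real.norm_eq_abs, abs_of_nonneg]
    exact_mod_cast pell_nonneg n
  have h2 : ‖(1 - (pell (n + 1) : ℂ))‖ = ((pell (n+1) : ℝ) - 1) := by
    have : (1 - (pell (n + 1) : ℂ)) = (((1 - pell (n+1) : ℚ)) : ℂ) := by push_cast; ring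
    rw [this, ← Complex.ofReal_ratCast, Complex.norm_real, Real.norm_eq_abs, abs_of_nonpos]
    · push_cast; ring
    · have := pell_ge_one n
      have : (1:ℝ) ≤ (pell (n+1) : ℝ) := by exact_mod_cast this
      push_cast; linarith
  rw [h1, h2] at habs
  -- so pell n = pell (n+1) - 1, but pell (n+1) = 2 pell n + pell (n-1) ≥ pell n + 2
  obtain ⟨m, rfl⟩ : ∃ m, n = m + 2 := ⟨n - 2, by omega⟩
  have hp : pell (m + 3) = 2 * pell (m + 2) + pell (m + 1) := by rw [pell]
  have g1 := pell_ge_one m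
  have g2 := pell_ge_one (m + 1)
  have habs' : (pell (m+2) : ℝ) + 1 = (pell (m+2+1) : ℝ) := by linarith [habs]
  have : (pell (m+2) : ℚ) + 1 = pell (m+3) := by exact_mod_cast habs'
  rw [hp] at this
  linarith
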